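/- There exists a universal constant C' > 0 with the following property. Let f^{(1)}, …, f^{(m)} ∈ ℝ^n be the frequency vectors of an insertion-only stream, let 0 < γ ≤ 1, and let T ∈ ℝ^{k×n} be a (1±γ)-embedding of {f^{(1)}, …, f^{(m)}}. Let Z̄_1, …, Z̄_k be i.i.d. Rademacher random variables and define Y_t = ⟨Z̄, T f^{(t)}⟩ for t ∈ [m]. Then E[ sup_{t∈[m]} |Y_t| ] ≤ C' (1+γ) ‖f^{(m)}‖₂. -/

import Mathlib

open MeasureTheory ProbabilityTheory
open scoped ENNReal

/-- The Euclidean (ℓ₂) norm of a vector in ℝ^k. -/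
noncomputable def l2norm {k : ℕ} (x : Fin k → ℝ) : ℝ := Real.sqrt (∑ i, (x i) ^ 2)

/-- The frequency vector at time `t` of the insertion-only stream `p` over universe `[n]`. -/
noncomputable def freq {n m : ℕ} (p : Fin m → Fin n) (t : ℕ) : Fin n → ℝ :=
  fun j => ((Finset.univ.filter fun t' : Fin m => (t' : ℕ) < t ∧ p t' = j).card : ℝ)

/-- The law of a Rademacher random variable: uniform on `{-1, +1}`. -/
noncomputable def radMeasure : Measure ℝ :=
  (2⁻¹ : ℝ≥0∞) • Measure.dirac (1 : ℝ) + (2⁻¹ : ℝ≥0∞) • Measure.dirac (-1 : ℝ)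

/-- A matrix `T ∈ ℝ^{k×n}` is a `(1±γ)`-embedding of a set `V ⊆ ℝ^n` if
`(1−γ)‖x−y‖₂ ≤ ‖Tx−Ty‖₂ ≤ (1+γ)‖x−y‖₂` for all `x, y ∈ V ∪ {0}`. -/
def IsJLEmbedding {k n : ℕ} (γ : ℝ) (T : Matrix (Fin k) (Fin n) ℝ)
    (V : Set (Fin n → ℝ)) : Prop :=
  ∀ x ∈ V ∪ {0}, ∀ y ∈ V ∪ {0},
    (1 - γ) * l2norm (x - y) ≤ l2norm (T.mulVec x - T.mulVec y) ∧
    l2norm (T.mulVec x - T.mulVec y) ≤ (1 + γ) * l2norm (x - y)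

section Aux

variable {k : ℕ} {Ω : Type} [MeasurableSpace Ω] {μ : Measure Ω} [IsProbabilityMeasure μ]
  {Z : Fin k → Ω → ℝ}

lemma radMeasure_integral (f : ℝ → ℝ) :
    ∫ x, f x ∂radMeasure = 2⁻¹ * f 1 + 2⁻¹ * f (-1) := by
  have h1 : Integrable f (Measure.dirac (1:ℝ)) :=
    (integrable_const (f 1)).congr (ae_eq_dirac f).symm
  have h2 : Integrable f (Measure.dirac (-1:ℝ)) :=
    (integrable_const (f (-1))).congr (ae_eq_dirac f).symm
  rw [radMeasure, integral_add_measure (h1.smul_measure (by norm_num))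
    (h2.smul_measure (by norm_num)), integral_smul_measure, integral_smul_measure,
    integral_dirac, integral_dirac]
  norm_num

lemma radMeasure_ae : ∀ᵐ x ∂radMeasure, x = 1 ∨ x = -1 := by
  rw [ae_iff]
  have hms : MeasurableSet {x : ℝ | ¬(x = 1 ∨ x = -1)} := by
    have h : {x : ℝ | ¬(x = 1 ∨ x = -1)} = ({1, -1} : Set ℝ)ᶜ := by ext x; simp [not_or]
    rw [h]; exact (Set.Finite.measurableSet (Set.toFinite _)).compl
  rw [radMeasure]
  simp only [Measure.add_apply, Measure.smul_apply, smul_eq_mul]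
  rw [Measure.dirac_apply' _ hms, Measure.dirac_apply' _ hms]
  simp [Set.indicator_of_notMem]

lemma rad_ae (hZm : ∀ i, Measurable (Z i))
    (hmap : ∀ i, Measure.map (Z i) μ = radMeasure) :
    ∀ᵐ ω ∂μ, ∀ i, Z i ω = 1 ∨ Z i ω = -1 := by
  rw [ae_all_iff]
  intro i
  have hms : MeasurableSet {x : ℝ | x = 1 ∨ x = -1} := by
    have h : {x : ℝ | x = 1 ∨ x = -1} = ({1, -1} : Set ℝ) := by ext x; simp
    rw [h]; exact Set.Finite.measurableSet (Set.toFinite _)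
  have h := radMeasure_ae
  rw [← hmap i] at h
  exact (ae_map_iff (hZm i).aemeasurable hms).mp h

lemma good_abs {v : Fin k → ℝ} {ω : Ω} (h : ∀ i, Z i ω = 1 ∨ Z i ω = -1) :
    |∑ i, Z i ω * v i| ≤ ∑ i, |v i| := by
  refine (Finset.abs_sum_le_sum_abs _ _).trans (Finset.sum_le_sum fun i _ => ?_)
  rw [abs_mul]
  rcases h i with h' | h' <;> simp [h']

lemma W_meas (hZm : ∀ i, Measurable (Z i)) (v : Fin k → ℝ) :
    Measurable fun ω => ∑ i, Z i ω * v i :=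
  Finset.measurable_sum _ fun i _ => (hZm i).mul_const _

lemma int_exp (hZm : ∀ i, Measurable (Z i))
    (hmap : ∀ i, Measure.map (Z i) μ = radMeasure) (v : Fin k → ℝ) (s : ℝ) :
    Integrable (fun ω => Real.exp (s * ∑ i, Z i ω * v i)) μ := by
  refine Integrable.mono' (integrable_const (Real.exp (|s| * ∑ i, |v i|)))
    ((W_meas hZm v).const_mul s).exp.aestronglyMeasurable ?_
  filter_upwards [rad_ae hZm hmap] with ω hω
  rw [Real.norm_eq_abs, abs_of_pos (Real.exp_pos _), Real.exp_le_exp]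
  calc s * ∑ i, Z i ω * v i ≤ |s * ∑ i, Z i ω * v i| := le_abs_self _
    _ = |s| * |∑ i, Z i ω * v i| := abs_mul _ _
    _ ≤ |s| * ∑ i, |v i| := by
        exact mul_le_mul_of_nonneg_left (good_abs hω) (abs_nonneg s)

lemma sup_meas (hZm : ∀ i, Measurable (Z i)) (S : Finset (Fin k → ℝ)) (hS : S.Nonempty) :
    Measurable fun ω => S.sup' hS fun v => |∑ i, Z i ω * v i| := by
  induction hS using Finset.Nonempty.cons_induction with
  | singleton v => simpa using (Finset.measurable_sum _ fun i _ => (hZm i).mul_const _).abs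
  | cons a s ha hs ih =>
      have e : ∀ ω, ((Finset.cons a s ha).sup' (Finset.cons_nonempty ha)
            fun v => |∑ i, Z i ω * v i|)
          = max (|∑ i, Z i ω * a i|) (s.sup' hs fun v => |∑ i, Z i ω * v i|) := by
        intro ω; rw [Finset.sup'_cons hs]
      simp only [e]
      exact ((Finset.measurable_sum _ fun i _ => (hZm i).mul_const _).abs).max ih

lemma int_sup (hZm : ∀ i, Measurable (Z i))
    (hmap : ∀ i, Measure.map (Z i) μ = radMeasure) (S : Finset (Fin k → ℝ))
    (hS : S.Nonempty) :
    Integrable (fun ω => S.sup' hS fun v => |∑ i, Z i ω * v i|) μ := by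
  refine Integrable.mono' (integrable_const (S.sup' hS fun v => ∑ i, |v i|))
    (sup_meas hZm S hS).aestronglyMeasurable ?_
  filter_upwards [rad_ae hZm hmap] with ω hω
  have hnn : (0:ℝ) ≤ S.sup' hS fun v => |∑ i, Z i ω * v i| :=
    le_trans (abs_nonneg (∑ i, Z i ω * hS.choose i))
      (Finset.le_sup' (fun v => |∑ i, Z i ω * v i|) hS.choose_spec)
  rw [Real.norm_eq_abs, abs_of_nonneg hnn]
  exact Finset.sup'_le _ _ fun v hv =>
    (good_abs hω).trans (Finset.le_sup' (fun v => ∑ i, |v i|) hv)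

lemma mgf_bound (hZm : ∀ i, Measurable (Z i))
    (hindep : iIndepFun Z μ)
    (hmap : ∀ i, Measure.map (Z i) μ = radMeasure) (v : Fin k → ℝ) (s : ℝ) :
    ∫ ω, Real.exp (s * ∑ i, Z i ω * v i) ∂μ ≤ Real.exp (s^2 * (∑ i, v i^2) / 2) := by
  classical
  set X : Fin k → Ω → ℝ := fun i ω => Z i ω * v i with hX
  have hXm : ∀ i, Measurable (X i) := fun i => (hZm i).mul_const _
  have hXindep : iIndepFun X μ :=
    hindep.comp (fun i x => x * v i) fun i => measurable_mul_const _
  have h1 : ∫ ω, Real.exp (s * ∑ i, Z i ω * v i) ∂μ = mgf (∑ i, X i) μ s := by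
    rw [mgf]
    congr 1
    ext ω
    simp [X, Finset.sum_apply]
  rw [h1, hXindep.mgf_sum hXm]
  have h2 : ∀ i : Fin k, mgf (X i) μ s ≤ Real.exp (s^2 * v i^2 / 2) := by
    intro i
    have hmeas : AEStronglyMeasurable (fun x : ℝ => Real.exp (s * (x * v i))) radMeasure :=
      (measurable_id.mul_const _ |>.const_mul s).exp.aestronglyMeasurable
    have e1 : mgf (X i) μ s = ∫ x, Real.exp (s * (x * v i)) ∂(Measure.map (Z i) μ) := by
      rw [integral_map (hZm i).aemeasurable (by rw [hmap i]; exact hmeas)]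
      rfl
    rw [e1, hmap i, radMeasure_integral]
    have : 2⁻¹ * Real.exp (s * (1 * v i)) + 2⁻¹ * Real.exp (s * (-1 * v i))
        = Real.cosh (s * v i) := by
      rw [Real.cosh_eq]
      ring_nf
    rw [this]
    calc Real.cosh (s * v i) ≤ Real.exp ((s * v i)^2 / 2) := Real.cosh_le_exp_half_sq _
      _ = Real.exp (s^2 * v i^2 / 2) := by rw [mul_pow]
  calc ∏ i, mgf (X i) μ s ≤ ∏ i, Real.exp (s^2 * v i^2 / 2) :=
        Finset.prod_le_prod (fun i _ => mgf_nonneg) fun i _ => h2 i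
    _ = Real.exp (s^2 * (∑ i, v i^2) / 2) := by
        rw [← Real.exp_sum]
        congr 1
        rw [Finset.mul_sum, Finset.sum_div]

lemma maxineq (hZm : ∀ i, Measurable (Z i))
    (hindep : iIndepFun Z μ)
    (hmap : ∀ i, Measure.map (Z i) μ = radMeasure)
    (S : Finset (Fin k → ℝ)) (hS : S.Nonempty) (c2 lam : ℝ) (hlam : 0 < lam)
    (hc2 : ∀ v ∈ S, (∑ i, v i ^ 2) ≤ c2) :
    ∫ ω, S.sup' hS (fun v => |∑ i, Z i ω * v i|) ∂μ
      ≤ (Real.log (2 * S.card) + lam ^ 2 * c2 / 2) / lam := by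
  classical
  set W : (Fin k → ℝ) → Ω → ℝ := fun v ω => ∑ i, Z i ω * v i with hW
  set G : Ω → ℝ := fun ω => ∑ v ∈ S, (Real.exp (lam * W v ω) + Real.exp (-lam * W v ω))
    with hG
  have hGint : Integrable G μ := by
    refine integrable_finset_sum _ fun v _ => Integrable.add ?_ ?_
    · exact int_exp hZm hmap v lam
    · exact int_exp hZm hmap v (-lam)
  have hGm : Measurable G :=
    Finset.measurable_sum _ fun v _ =>
      (((W_meas hZm v).const_mul lam).exp).add (((W_meas hZm v).const_mul (-lam)).exp)
  have hG2 : ∀ ω, 2 ≤ G ω := by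
    intro ω
    obtain ⟨v₀, hv₀⟩ := hS
    have h1 : 2 ≤ Real.exp (lam * W v₀ ω) + Real.exp (-lam * W v₀ ω) := by
      nlinarith [Real.add_one_le_exp (lam * W v₀ ω), Real.add_one_le_exp (-lam * W v₀ ω)]
    exact h1.trans (Finset.single_le_sum
      (f := fun v => Real.exp (lam * W v ω) + Real.exp (-lam * W v ω))
      (fun v _ => by positivity) hv₀)
  have hGpos : ∀ ω, 0 < G ω := fun ω => lt_of_lt_of_le two_pos (hG2 ω)
  set I : ℝ := ∫ ω, G ω ∂μ with hI
  have hI2 : 2 ≤ I := by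
    have := integral_mono (integrable_const (2:ℝ)) hGint hG2
    simpa using this
  have hIpos : 0 < I := lt_of_lt_of_le two_pos hI2
  -- pathwise bound
  have step1 : ∀ ω, S.sup' hS (fun v => |W v ω|) ≤ Real.log (G ω) / lam := by
    intro ω
    refine Finset.sup'_le _ _ fun v hv => ?_
    rw [le_div_iff₀ hlam]
    have hexp : Real.exp (|W v ω| * lam) ≤ G ω := by
      have hpair : Real.exp (|W v ω| * lam)
          ≤ Real.exp (lam * W v ω) + Real.exp (-lam * W v ω) := by
        rcases abs_cases (W v ω) with ⟨h1, _⟩ | ⟨h1, _⟩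
        · rw [h1, mul_comm]
          exact le_add_of_nonneg_right (Real.exp_pos _).le
        · rw [h1]
          have : -W v ω * lam = -lam * W v ω := by ring
          rw [this]
          exact le_add_of_nonneg_left (Real.exp_pos _).le
      exact hpair.trans (Finset.single_le_sum
        (f := fun v' => Real.exp (lam * W v' ω) + Real.exp (-lam * W v' ω))
        (fun v' _ => by positivity) hv)
    exact (Real.le_log_iff_exp_le (hGpos ω)).mpr hexp
  have hintlog : Integrable (fun ω => Real.log (G ω)) μ := by
    set C2 : ℝ := ∑ v ∈ S, (2 * Real.exp (|lam| * ∑ i, |v i|)) with hC2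
    have hGle : ∀ᵐ ω ∂μ, G ω ≤ C2 := by
      filter_upwards [rad_ae hZm hmap] with ω hω
      refine Finset.sum_le_sum fun v _ => ?_
      have hb : |W v ω| ≤ ∑ i, |v i| := good_abs hω
      have h1 : lam * W v ω ≤ |lam| * ∑ i, |v i| := by
        calc lam * W v ω ≤ |lam * W v ω| := le_abs_self _
          _ = |lam| * |W v ω| := abs_mul _ _
          _ ≤ |lam| * ∑ i, |v i| := mul_le_mul_of_nonneg_left hb (abs_nonneg _)
      have h2 : -lam * W v ω ≤ |lam| * ∑ i, |v i| := by
        calc -lam * W v ω ≤ |(-lam) * W v ω| := le_abs_self _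
          _ = |lam| * |W v ω| := by rw [abs_mul, abs_neg]
          _ ≤ |lam| * ∑ i, |v i| := mul_le_mul_of_nonneg_left hb (abs_nonneg _)
      have := add_le_add (Real.exp_le_exp.mpr h1) (Real.exp_le_exp.mpr h2)
      linarith
    refine Integrable.mono' (integrable_const (|Real.log C2|)) (hGm.log).aestronglyMeasurable ?_
    filter_upwards [hGle] with ω hω
    rw [Real.norm_eq_abs]
    have hlogpos : 0 ≤ Real.log (G ω) := by
      rw [← Real.log_one]
      exact Real.log_le_log one_pos (by linarith [hG2 ω])
    rw [abs_of_nonneg hlogpos]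
    exact (Real.log_le_log (hGpos ω) hω).trans (le_abs_self _)
  have step3 : ∫ ω, Real.log (G ω) ∂μ ≤ Real.log I := by
    have hpt : ∀ ω, Real.log (G ω) ≤ G ω / I + (Real.log I - 1) := by
      intro ω
      have h := Real.log_le_sub_one_of_pos (div_pos (hGpos ω) hIpos)
      rw [Real.log_div (hGpos ω).ne' hIpos.ne'] at h
      linarith
    have hI3 : Integrable (fun ω => G ω / I + (Real.log I - 1)) μ :=
      (hGint.div_const I).add (integrable_const _)
    calc ∫ ω, Real.log (G ω) ∂μ ≤ ∫ ω, (G ω / I + (Real.log I - 1)) ∂μ :=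
          integral_mono hintlog hI3 hpt
      _ = (∫ ω, G ω ∂μ) / I + (Real.log I - 1) := by
          rw [integral_add (hGint.div_const I) (integrable_const _), integral_div,
            integral_const]
          simp
      _ = Real.log I := by
          rw [← hI, div_self hIpos.ne']
          ring
  have step4 : I ≤ 2 * S.card * Real.exp (lam ^ 2 * c2 / 2) := by
    have e1 : I = ∑ v ∈ S, (∫ ω, Real.exp (lam * W v ω) ∂μ
        + ∫ ω, Real.exp (-lam * W v ω) ∂μ) := by
      calc I = ∫ ω, ∑ v ∈ S, (Real.exp (lam * W v ω) + Real.exp (-lam * W v ω)) ∂μ := rfl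
        _ = ∑ v ∈ S, ∫ ω, (Real.exp (lam * W v ω) + Real.exp (-lam * W v ω)) ∂μ :=
            integral_finset_sum S fun v _ =>
              Integrable.add (int_exp hZm hmap v lam) (int_exp hZm hmap v (-lam))
        _ = ∑ v ∈ S, (∫ ω, Real.exp (lam * W v ω) ∂μ + ∫ ω, Real.exp (-lam * W v ω) ∂μ) :=
            Finset.sum_congr rfl fun v _ =>
              integral_add (int_exp hZm hmap v lam) (int_exp hZm hmap v (-lam))
    rw [e1]
    have hone : ∀ v ∈ S, (∫ ω, Real.exp (lam * W v ω) ∂μ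
        + ∫ ω, Real.exp (-lam * W v ω) ∂μ) ≤ 2 * Real.exp (lam ^ 2 * c2 / 2) := by
      intro v hv
      have hexple : Real.exp (lam ^ 2 * (∑ i, v i ^ 2) / 2) ≤ Real.exp (lam ^ 2 * c2 / 2) := by
        rw [Real.exp_le_exp]
        have := hc2 v hv
        nlinarith [sq_nonneg lam]
      have h1 := (mgf_bound hZm hindep hmap v lam).trans hexple
      have h2' := mgf_bound hZm hindep hmap v (-lam)
      rw [show (-lam) ^ 2 * (∑ i, v i ^ 2) / 2 = lam ^ 2 * (∑ i, v i ^ 2) / 2 by ring] at h2'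
      have h2 := h2'.trans hexple
      linarith
    calc ∑ v ∈ S, (∫ ω, Real.exp (lam * W v ω) ∂μ + ∫ ω, Real.exp (-lam * W v ω) ∂μ)
        ≤ ∑ _v ∈ S, 2 * Real.exp (lam ^ 2 * c2 / 2) := Finset.sum_le_sum hone
      _ = 2 * S.card * Real.exp (lam ^ 2 * c2 / 2) := by
          rw [Finset.sum_const, nsmul_eq_mul]
          ring
  have hcard0 : (0:ℝ) < S.card := by
    have := Finset.card_pos.mpr hS
    exact_mod_cast this
  have step5 : Real.log I ≤ Real.log (2 * S.card) + lam ^ 2 * c2 / 2 := by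
    calc Real.log I ≤ Real.log (2 * S.card * Real.exp (lam ^ 2 * c2 / 2)) :=
          Real.log_le_log hIpos step4
      _ = Real.log (2 * S.card) + lam ^ 2 * c2 / 2 := by
          rw [Real.log_mul (by positivity) (Real.exp_pos _).ne', Real.log_exp]
  calc ∫ ω, S.sup' hS (fun v => |W v ω|) ∂μ ≤ ∫ ω, Real.log (G ω) / lam ∂μ :=
        integral_mono (int_sup hZm hmap S hS) (hintlog.div_const lam) step1
    _ = (∫ ω, Real.log (G ω) ∂μ) / lam := integral_div lam _
    _ ≤ (Real.log (2 * S.card) + lam ^ 2 * c2 / 2) / lam := by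
        exact div_le_div_of_nonneg_right (step3.trans step5) hlam.le

lemma level_bound (hZm : ∀ i, Measurable (Z i))
    (hindep : iIndepFun Z μ)
    (hmap : ∀ i, Measure.map (Z i) μ = radMeasure)
    (D : ℝ) (hD : 0 < D) (ℓ : ℕ) (S : Finset (Fin k → ℝ)) (hS : S.Nonempty)
    (hcard : (S.card : ℝ) ≤ 2 ^ (ℓ + 1))
    (hc2 : ∀ v ∈ S, (∑ i, v i ^ 2) ≤ D ^ 2 / 2 ^ ℓ) :
    ∫ ω, S.sup' hS (fun v => |∑ i, Z i ω * v i|) ∂μ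
      ≤ ((ℓ : ℝ) + 2) * D * ((Real.sqrt 2)⁻¹) ^ ℓ := by
  have hs2 : (0:ℝ) < Real.sqrt 2 := Real.sqrt_pos.mpr two_pos
  have hs2sq : (Real.sqrt 2) ^ 2 = 2 := Real.sq_sqrt two_pos.le
  set lam : ℝ := ((ℓ : ℝ) + 2) * (Real.sqrt 2) ^ ℓ / D with hlamdef
  have hlam : 0 < lam := by positivity
  refine (maxineq hZm hindep hmap S hS (D ^ 2 / 2 ^ ℓ) lam hlam hc2).trans ?_
  rw [div_le_iff₀ hlam]
  have hsp : ((Real.sqrt 2) ^ ℓ) ^ 2 = 2 ^ ℓ := by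
    rw [← pow_mul, mul_comm, pow_mul, hs2sq]
  have e1 : lam ^ 2 * (D ^ 2 / 2 ^ ℓ) / 2 = ((ℓ : ℝ) + 2) ^ 2 / 2 := by
    rw [hlamdef, div_pow, mul_pow, hsp]
    field_simp
    try ring
  have e3 : (((ℓ:ℝ) + 2) * D * ((Real.sqrt 2)⁻¹) ^ ℓ) * lam = ((ℓ:ℝ) + 2) ^ 2 := by
    rw [hlamdef, inv_pow]
    field_simp
    try ring
  have e2 : Real.log (2 * S.card) ≤ (ℓ : ℝ) + 2 := by
    have hcpos : (0:ℝ) < S.card := by exact_mod_cast Finset.card_pos.mpr hS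
    have h1 : Real.log (2 * S.card) ≤ Real.log (2 ^ (ℓ + 2)) := by
      apply Real.log_le_log (by positivity)
      calc (2:ℝ) * S.card ≤ 2 * 2 ^ (ℓ+1) := by linarith
        _ = 2 ^ (ℓ + 2) := by ring
    have h2 : Real.log ((2:ℝ) ^ (ℓ + 2)) = ((ℓ:ℝ) + 2) * Real.log 2 := by
      rw [Real.log_pow]
      push_cast
      ring
    have h3 : Real.log 2 ≤ 1 := by
      have := Real.log_le_sub_one_of_pos (x := 2) two_pos
      linarith
    have h4 : ((ℓ:ℝ) + 2) * Real.log 2 ≤ ((ℓ:ℝ) + 2) * 1 := by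
      apply mul_le_mul_of_nonneg_left h3
      positivity
    rw [h2] at h1
    linarith
  rw [e1, e3]
  have hl0 : (0:ℝ) ≤ (ℓ:ℝ) := Nat.cast_nonneg ℓ
  nlinarith

lemma term78 (ℓ : ℕ) : ((ℓ:ℝ) + 2) * ((Real.sqrt 2)⁻¹) ^ ℓ ≤ 6 * (7/8 : ℝ) ^ ℓ := by
  have hs2 : (0:ℝ) < Real.sqrt 2 := Real.sqrt_pos.mpr two_pos
  have h14 : (1.4:ℝ) ≤ Real.sqrt 2 := by
    nlinarith [Real.sq_sqrt (by norm_num : (2:ℝ) ≥ 0), Real.sqrt_nonneg 2]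
  have key : ((ℓ:ℝ) + 2) ≤ 6 * ((7/8) * Real.sqrt 2) ^ ℓ := by
    have hge : (1:ℝ) + 0.225 ≤ (7/8) * Real.sqrt 2 := by nlinarith
    have hb : 1 + (ℓ:ℝ) * 0.225 ≤ (1 + 0.225) ^ ℓ := by
      have := one_add_mul_le_pow (a := (0.225:ℝ)) (by norm_num) ℓ
      linarith
    have hmono : ((1:ℝ) + 0.225) ^ ℓ ≤ ((7/8) * Real.sqrt 2) ^ ℓ :=
      pow_le_pow_left₀ (by norm_num) hge ℓ
    have hl0 : (0:ℝ) ≤ (ℓ:ℝ) := Nat.cast_nonneg ℓ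
    nlinarith
  have hinvpos : (0:ℝ) < ((Real.sqrt 2)⁻¹) ^ ℓ := by positivity
  have e : (6 * ((7/8) * Real.sqrt 2) ^ ℓ) * ((Real.sqrt 2)⁻¹) ^ ℓ = 6 * (7/8:ℝ) ^ ℓ := by
    have h78 : ((7/8) * Real.sqrt 2) * (Real.sqrt 2)⁻¹ = (7/8:ℝ) := by
      field_simp
    rw [mul_assoc, ← mul_pow, h78]
  calc ((ℓ:ℝ) + 2) * ((Real.sqrt 2)⁻¹) ^ ℓ
      ≤ (6 * ((7/8) * Real.sqrt 2) ^ ℓ) * ((Real.sqrt 2)⁻¹) ^ ℓ :=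
        mul_le_mul_of_nonneg_right key hinvpos.le
    _ = 6 * (7/8:ℝ) ^ ℓ := e

lemma series_bound (K : ℕ) :
    ∑ ℓ ∈ Finset.range K, (((ℓ:ℝ)) + 2) * ((Real.sqrt 2)⁻¹) ^ ℓ ≤ 48 := by
  calc ∑ ℓ ∈ Finset.range K, (((ℓ:ℝ)) + 2) * ((Real.sqrt 2)⁻¹) ^ ℓ
      ≤ ∑ ℓ ∈ Finset.range K, 6 * (7/8:ℝ) ^ ℓ :=
        Finset.sum_le_sum fun ℓ _ => term78 ℓ
    _ = 6 * ∑ ℓ ∈ Finset.range K, (7/8:ℝ) ^ ℓ := by rw [Finset.mul_sum]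
    _ ≤ 6 * 8 := by
        have h := geom_sum_eq (by norm_num : (7/8:ℝ) ≠ 1) K
        have hp : (0:ℝ) ≤ (7/8:ℝ) ^ K := by positivity
        have : ∑ ℓ ∈ Finset.range K, (7/8:ℝ) ^ ℓ ≤ 8 := by
          rw [h]
          rw [div_le_iff_of_neg (by norm_num : (7/8:ℝ) - 1 < 0)]
          linarith
        linarith
    _ = 48 := by norm_num

set_option maxHeartbeats 1000000 in
lemma chain_main (hZm : ∀ i, Measurable (Z i))
    (hindep : iIndepFun Z μ)
    (hmap : ∀ i, Measure.map (Z i) μ = radMeasure)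
    (m : ℕ) (hm : 0 < m) (g : Fin m → Fin k → ℝ) (b : Fin m → ℝ) (B D : ℝ)
    (hBpos : 0 < B) (hDpos : 0 < D)
    (hb0 : ∀ t, 0 ≤ b t) (hbB : ∀ t, b t ≤ B)
    (hzero : ∀ t, (∑ i, (g t i) ^ 2) ≤ D ^ 2 / 2)
    (hlip : ∀ s t : Fin m, (∑ i, (g t i - g s i) ^ 2) ≤ D ^ 2 / (2 * B) * |b t - b s|) :
    ∫ ω, (⨆ t : Fin m, |∑ i, Z i ω * g t i|) ∂μ ≤ 54 * D := by
  classical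
  haveI : Nonempty (Fin m) := ⟨⟨0, hm⟩⟩
  set t0 : Fin m := ⟨0, hm⟩ with ht0
  set cls : ℕ → Fin m → ℕ := fun j t => ⌊b t * 2 ^ j / B⌋₊ with hclsdef
  set rep : ℕ → ℕ → Fin m := fun j c => if h : ∃ s : Fin m, cls j s = c then h.choose else t0
    with hrepdef
  set piF : ℕ → Fin m → Fin m := fun j t => rep j (cls j t) with hpidef
  have hrep : ∀ (j : ℕ) (c : ℕ), (h : ∃ s : Fin m, cls j s = c) → cls j (rep j c) = c := by
    intro j c h
    rw [hrepdef]
    simp only [dif_pos h]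
    exact h.choose_spec
  have hcls_le : ∀ (j : ℕ) (t : Fin m), cls j t ≤ 2 ^ j := by
    intro j t
    have h1 : b t * 2 ^ j / B ≤ ((2 ^ j : ℕ) : ℝ) := by
      rw [div_le_iff₀ hBpos]
      push_cast
      have := hbB t
      have h2j : (0:ℝ) < 2 ^ j := by positivity
      nlinarith
    calc cls j t ≤ ⌊((2 ^ j : ℕ) : ℝ)⌋₊ := Nat.floor_mono h1
      _ = 2 ^ j := Nat.floor_natCast _
  have hwidth : ∀ (j : ℕ) (s t : Fin m), cls j s = cls j t → b t - b s ≤ B / 2 ^ j := by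
    intro j s t h
    have h2j : (0:ℝ) < 2 ^ j := by positivity
    have hfs : ((cls j s : ℕ) : ℝ) ≤ b s * 2 ^ j / B :=
      Nat.floor_le (div_nonneg (mul_nonneg (hb0 s) (by positivity)) hBpos.le)
    have hft : b t * 2 ^ j / B < (cls j t : ℕ) + 1 := Nat.lt_floor_add_one _
    rw [← h] at hft
    have h2 : b t * 2 ^ j / B - b s * 2 ^ j / B ≤ 1 := by linarith
    have h3 := mul_le_mul_of_nonneg_right h2 hBpos.le
    have e : (b t * 2 ^ j / B - b s * 2 ^ j / B) * B = (b t - b s) * 2 ^ j := by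
      field_simp
    rw [e, one_mul] at h3
    rw [le_div_iff₀ h2j]
    linarith
  have hnest : ∀ (j : ℕ) (t : Fin m), cls j t = cls (j + 1) t / 2 := by
    intro j t
    have e : b t * 2 ^ j / B = (b t * 2 ^ (j + 1) / B) / ((2 : ℕ) : ℝ) := by
      push_cast
      rw [pow_succ]
      field_simp
    rw [hclsdef]
    simp only
    rw [e, Nat.floor_div_natCast]
  have hsame : ∀ (j : ℕ) (s t : Fin m), cls j s = cls j t →
      (∑ i, (g t i - g s i) ^ 2) ≤ D ^ 2 / 2 ^ (j + 1) := by
    intro j s t h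
    refine (hlip s t).trans ?_
    have h1 : |b t - b s| ≤ B / 2 ^ j :=
      abs_sub_le_iff.mpr ⟨hwidth j s t h, hwidth j t s h.symm⟩
    calc D ^ 2 / (2 * B) * |b t - b s| ≤ D ^ 2 / (2 * B) * (B / 2 ^ j) := by
          apply mul_le_mul_of_nonneg_left h1
          positivity
      _ = D ^ 2 / 2 ^ (j + 1) := by
          rw [pow_succ]
          field_simp
          ring
  -- The level sets
  set F0 : ℕ → (Fin k → ℝ) := fun c => g (rep 0 c) with hF0
  set FL : ℕ → ℕ → (Fin k → ℝ) := fun j c => g (rep (j + 1) c) - g (rep j (c / 2)) with hFL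
  set FR : Fin m → (Fin k → ℝ) := fun t => g t - g (piF (2 * m) t) with hFR
  set S0 : Finset (Fin k → ℝ) :=
    ((Finset.range (2 ^ 0 + 1)).filter fun c => ∃ s : Fin m, cls 0 s = c).image F0 with hS0def
  set SL : ℕ → Finset (Fin k → ℝ) := fun j =>
    ((Finset.range (2 ^ (j + 1) + 1)).filter fun c => ∃ s : Fin m, cls (j + 1) s = c).image (FL j)
    with hSLdef
  set SR : Finset (Fin k → ℝ) := Finset.univ.image FR with hSRdef
  have hmem0 : ∀ t : Fin m, g (piF 0 t) ∈ S0 := by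
    intro t
    exact Finset.mem_image_of_mem F0 (Finset.mem_filter.mpr
      ⟨Finset.mem_range.mpr (Nat.lt_succ_of_le (hcls_le 0 t)), ⟨t, rfl⟩⟩)
  have hmemL : ∀ (j : ℕ) (t : Fin m), g (piF (j + 1) t) - g (piF j t) ∈ SL j := by
    intro j t
    have hmemc : cls (j + 1) t ∈ (Finset.range (2 ^ (j + 1) + 1)).filter
        fun c => ∃ s : Fin m, cls (j + 1) s = c :=
      Finset.mem_filter.mpr ⟨Finset.mem_range.mpr (Nat.lt_succ_of_le (hcls_le (j + 1) t)),
        ⟨t, rfl⟩⟩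
    have e : FL j (cls (j + 1) t) = g (piF (j + 1) t) - g (piF j t) := by
      rw [hFL, hpidef]
      simp only
      rw [← hnest j t]
    rw [← e]
    exact Finset.mem_image_of_mem _ hmemc
  have hmemR : ∀ t : Fin m, g t - g (piF (2 * m) t) ∈ SR :=
    fun t => Finset.mem_image_of_mem FR (Finset.mem_univ t)
  have hS0 : S0.Nonempty := ⟨_, hmem0 t0⟩
  have hSL : ∀ j, (SL j).Nonempty := fun j => ⟨_, hmemL j t0⟩
  have hSR : SR.Nonempty := ⟨_, hmemR t0⟩
  -- cardinalities
  have hcard0 : ((S0.card : ℝ)) ≤ 2 ^ (0 + 1) := by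
    have h1 : S0.card ≤ 2 ^ 0 + 1 :=
      Finset.card_image_le.trans ((Finset.card_filter_le _ _).trans (by rw [Finset.card_range]))
    have : ((S0.card : ℝ)) ≤ ((2 ^ 0 + 1 : ℕ) : ℝ) := by exact_mod_cast h1
    calc ((S0.card : ℝ)) ≤ ((2 ^ 0 + 1 : ℕ) : ℝ) := this
      _ = 2 := by norm_num
      _ ≤ 2 ^ (0 + 1) := by norm_num
  have hcardL : ∀ j : ℕ, (((SL j).card : ℝ)) ≤ 2 ^ ((j + 1) + 1) := by
    intro j
    have h1 : (SL j).card ≤ 2 ^ (j + 1) + 1 :=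
      Finset.card_image_le.trans ((Finset.card_filter_le _ _).trans (by rw [Finset.card_range]))
    have h2 : 2 ^ (j + 1) + 1 ≤ 2 ^ (j + 2) := by
      have := Nat.one_le_two_pow (n := j + 1)
      have e : 2 ^ (j + 2) = 2 ^ (j + 1) + 2 ^ (j + 1) := by ring
      omega
    have : ((SL j).card : ℝ) ≤ ((2 ^ (j + 2) : ℕ) : ℝ) := by exact_mod_cast h1.trans h2
    calc (((SL j).card : ℝ)) ≤ ((2 ^ (j + 2) : ℕ) : ℝ) := this
      _ = 2 ^ ((j + 1) + 1) := by push_cast; ring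
  have hcardR : ((SR.card : ℝ)) ≤ 2 ^ (2 * m + 1) := by
    have h1 : SR.card ≤ m := Finset.card_image_le.trans (by rw [Finset.card_univ, Fintype.card_fin])
    have h2 : m ≤ 2 ^ (2 * m + 1) := by
      calc m ≤ 2 ^ m := (Nat.lt_two_pow_self (n := m)).le
        _ ≤ 2 ^ (2 * m + 1) := Nat.pow_le_pow_right (by norm_num) (by omega)
    have : ((SR.card : ℝ)) ≤ ((2 ^ (2 * m + 1) : ℕ) : ℝ) := by exact_mod_cast h1.trans h2
    calc ((SR.card : ℝ)) ≤ ((2 ^ (2 * m + 1) : ℕ) : ℝ) := this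
      _ = 2 ^ (2 * m + 1) := by push_cast; ring
  -- second moment bounds
  have hc20 : ∀ v ∈ S0, (∑ i, v i ^ 2) ≤ D ^ 2 / 2 ^ 0 := by
    intro v hv
    obtain ⟨c, _, rfl⟩ := Finset.mem_image.mp hv
    calc (∑ i, (F0 c) i ^ 2) ≤ D ^ 2 / 2 := hzero _
      _ ≤ D ^ 2 / 2 ^ 0 := by
          rw [pow_zero]
          have := sq_nonneg D
          linarith [div_le_div_of_nonneg_left (sq_nonneg D) one_pos
            (by norm_num : (1:ℝ) ≤ 2)]
  have hc2L : ∀ j : ℕ, ∀ v ∈ SL j, (∑ i, v i ^ 2) ≤ D ^ 2 / 2 ^ (j + 1) := by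
    intro j v hv
    obtain ⟨c, hc, rfl⟩ := Finset.mem_image.mp hv
    obtain ⟨_, s, hs⟩ := Finset.mem_filter.mp hc
    have hca : cls (j + 1) (rep (j + 1) c) = c := hrep _ _ ⟨s, hs⟩
    have hs' : cls j s = c / 2 := by rw [hnest j s, hs]
    have hca' : cls j (rep j (c / 2)) = c / 2 := hrep _ _ ⟨s, hs'⟩
    have hsamecls : cls j (rep j (c / 2)) = cls j (rep (j + 1) c) := by
      rw [hca', hnest j (rep (j + 1) c), hca]
    exact hsame j (rep j (c / 2)) (rep (j + 1) c) hsamecls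
  have hc2R : ∀ v ∈ SR, (∑ i, v i ^ 2) ≤ D ^ 2 / 2 ^ (2 * m) := by
    intro v hv
    obtain ⟨t, _, rfl⟩ := Finset.mem_image.mp hv
    have hsamecls : cls (2 * m) (piF (2 * m) t) = cls (2 * m) t := hrep _ _ ⟨t, rfl⟩
    have h1 := hsame (2 * m) (piF (2 * m) t) t hsamecls
    refine h1.trans ?_
    apply div_le_div_of_nonneg_left (sq_nonneg D) (by positivity)
    apply pow_le_pow_right₀ (by norm_num)
    omega
  -- the max processes
  set M0 : Ω → ℝ := fun ω => S0.sup' hS0 fun v => |∑ i, Z i ω * v i| with hM0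
  set ML : ℕ → Ω → ℝ := fun j ω => (SL j).sup' (hSL j) fun v => |∑ i, Z i ω * v i| with hML
  set MR : Ω → ℝ := fun ω => SR.sup' hSR fun v => |∑ i, Z i ω * v i| with hMR
  have hWsub : ∀ (a c : Fin k → ℝ) (ω : Ω),
      (∑ i, Z i ω * (a - c) i) = (∑ i, Z i ω * a i) - ∑ i, Z i ω * c i := by
    intro a c ω
    rw [← Finset.sum_sub_distrib]
    exact Finset.sum_congr rfl fun i _ => by simp [Pi.sub_apply]; ring
  -- pathwise chaining bound
  have hpath : ∀ ω, (⨆ t : Fin m, |∑ i, Z i ω * g t i|)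
      ≤ M0 ω + (∑ j ∈ Finset.range (2 * m), ML j ω) + MR ω := by
    intro ω
    refine ciSup_le fun t => ?_
    have htel : (∑ i, Z i ω * g t i)
        = (∑ i, Z i ω * g (piF 0 t) i)
          + (∑ j ∈ Finset.range (2 * m),
              ((∑ i, Z i ω * g (piF (j + 1) t) i) - ∑ i, Z i ω * g (piF j t) i))
          + ((∑ i, Z i ω * g t i) - ∑ i, Z i ω * g (piF (2 * m) t) i) := by
      rw [Finset.sum_range_sub (f := fun j => ∑ i, Z i ω * g (piF j t) i)]
      ring
    have h0 : |∑ i, Z i ω * g (piF 0 t) i| ≤ M0 ω :=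
      Finset.le_sup' (fun v => |∑ i, Z i ω * v i|) (hmem0 t)
    have hLj : ∀ j ∈ Finset.range (2 * m),
        |(∑ i, Z i ω * g (piF (j + 1) t) i) - ∑ i, Z i ω * g (piF j t) i| ≤ ML j ω := by
      intro j _
      rw [← hWsub]
      exact Finset.le_sup' (fun v => |∑ i, Z i ω * v i|) (hmemL j t)
    have hR : |(∑ i, Z i ω * g t i) - ∑ i, Z i ω * g (piF (2 * m) t) i| ≤ MR ω := by
      rw [← hWsub]
      exact Finset.le_sup' (fun v => |∑ i, Z i ω * v i|) (hmemR t)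
    calc |∑ i, Z i ω * g t i|
        ≤ |∑ i, Z i ω * g (piF 0 t) i|
          + |∑ j ∈ Finset.range (2 * m),
              ((∑ i, Z i ω * g (piF (j + 1) t) i) - ∑ i, Z i ω * g (piF j t) i)|
          + |(∑ i, Z i ω * g t i) - ∑ i, Z i ω * g (piF (2 * m) t) i| := by
          rw [congrArg abs htel]
          exact (abs_add_le _ _).trans (add_le_add_left (abs_add_le _ _) _)
      _ ≤ M0 ω + (∑ j ∈ Finset.range (2 * m), ML j ω) + MR ω := by
          refine add_le_add (add_le_add h0 ?_) hR
          exact (Finset.abs_sum_le_sum_abs _ _).trans (Finset.sum_le_sum hLj)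
  -- integrability
  have hint0 : Integrable M0 μ := int_sup hZm hmap S0 hS0
  have hintL : ∀ j, Integrable (ML j) μ := fun j => int_sup hZm hmap (SL j) (hSL j)
  have hintR : Integrable MR μ := int_sup hZm hmap SR hSR
  have hintsum : Integrable (fun ω => ∑ j ∈ Finset.range (2 * m), ML j ω) μ :=
    integrable_finset_sum _ fun j _ => hintL j
  have hintMS : Integrable (fun ω => M0 ω + ∑ j ∈ Finset.range (2 * m), ML j ω) μ :=
    hint0.add hintsum
  have hrhsint : Integrable (fun ω => M0 ω + (∑ j ∈ Finset.range (2 * m), ML j ω) + MR ω) μ :=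
    hintMS.add hintR
  have hnonneg : ∀ ω, 0 ≤ ⨆ t : Fin m, |∑ i, Z i ω * g t i| := fun ω =>
    le_ciSup_of_le (Set.finite_range _).bddAbove t0 (abs_nonneg _)
  -- combine
  have r0 : (0:ℝ) < (Real.sqrt 2)⁻¹ := by
    have : (0:ℝ) < Real.sqrt 2 := Real.sqrt_pos.mpr two_pos
    positivity
  calc ∫ ω, (⨆ t : Fin m, |∑ i, Z i ω * g t i|) ∂μ
      ≤ ∫ ω, (M0 ω + (∑ j ∈ Finset.range (2 * m), ML j ω) + MR ω) ∂μ :=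
        integral_mono_of_nonneg (Filter.Eventually.of_forall hnonneg) hrhsint
          (Filter.Eventually.of_forall hpath)
    _ = (∫ ω, M0 ω ∂μ) + (∑ j ∈ Finset.range (2 * m), ∫ ω, ML j ω ∂μ) + ∫ ω, MR ω ∂μ := by
        rw [integral_add hintMS hintR, integral_add hint0 hintsum,
          integral_finset_sum _ fun j _ => hintL j]
    _ ≤ (((0:ℕ):ℝ) + 2) * D * ((Real.sqrt 2)⁻¹) ^ 0
        + (∑ j ∈ Finset.range (2 * m), (((j + 1 : ℕ):ℝ) + 2) * D * ((Real.sqrt 2)⁻¹) ^ (j + 1))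
        + (((2 * m : ℕ):ℝ) + 2) * D * ((Real.sqrt 2)⁻¹) ^ (2 * m) := by
        refine add_le_add (add_le_add ?_ ?_) ?_
        · exact level_bound hZm hindep hmap D hDpos 0 S0 hS0 hcard0 hc20
        · exact Finset.sum_le_sum fun j _ =>
            level_bound hZm hindep hmap D hDpos (j + 1) (SL j) (hSL j) (hcardL j) (hc2L j)
        · exact level_bound hZm hindep hmap D hDpos (2 * m) SR hSR hcardR hc2R
    _ = (∑ ℓ ∈ Finset.range (2 * m + 1), (((ℓ:ℕ):ℝ) + 2) * D * ((Real.sqrt 2)⁻¹) ^ ℓ)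
        + (((2 * m : ℕ):ℝ) + 2) * D * ((Real.sqrt 2)⁻¹) ^ (2 * m) := by
        rw [Finset.sum_range_succ' (fun ℓ => (((ℓ:ℕ):ℝ) + 2) * D * ((Real.sqrt 2)⁻¹) ^ ℓ) (2 * m)]
        push_cast
        ring
    _ ≤ 48 * D + 6 * D := by
        refine add_le_add ?_ ?_
        · have h1 : ∑ ℓ ∈ Finset.range (2 * m + 1), (((ℓ:ℕ):ℝ) + 2) * D * ((Real.sqrt 2)⁻¹) ^ ℓ
              = D * ∑ ℓ ∈ Finset.range (2 * m + 1), (((ℓ:ℕ):ℝ) + 2) * ((Real.sqrt 2)⁻¹) ^ ℓ := by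
            rw [Finset.mul_sum]
            exact Finset.sum_congr rfl fun ℓ _ => by ring
          rw [h1]
          calc D * ∑ ℓ ∈ Finset.range (2 * m + 1), (((ℓ:ℕ):ℝ) + 2) * ((Real.sqrt 2)⁻¹) ^ ℓ
              ≤ D * 48 := mul_le_mul_of_nonneg_left (series_bound _) hDpos.le
            _ = 48 * D := by ring
        · have h2 := term78 (2 * m)
          have h3 : (7/8:ℝ) ^ (2 * m) ≤ 1 := pow_le_one₀ (by norm_num) (by norm_num)
          have h4 : ((2 * m : ℕ):ℝ) + 2 = ((2 * m : ℕ):ℝ) + 2 := rfl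
          have h5 : (((2 * m : ℕ):ℝ) + 2) * ((Real.sqrt 2)⁻¹) ^ (2 * m) ≤ 6 := by
            refine h2.trans ?_
            nlinarith
          calc (((2 * m : ℕ):ℝ) + 2) * D * ((Real.sqrt 2)⁻¹) ^ (2 * m)
              = ((((2 * m : ℕ):ℝ) + 2) * ((Real.sqrt 2)⁻¹) ^ (2 * m)) * D := by ring
            _ ≤ 6 * D := mul_le_mul_of_nonneg_right h5 hDpos.le
    _ = 54 * D := by ring

end Aux

/-- **Chaining Inequality for the JL-transformed stream (Rademacher case).** -/
theorem chaining_inequality_JL_bernoulli :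
    ∃ C' : ℝ, 0 < C' ∧
      ∀ (n m k : ℕ), 0 < m →
      ∀ (p : Fin m → Fin n) (γ : ℝ), 0 < γ → γ ≤ 1 →
      ∀ (T : Matrix (Fin k) (Fin n) ℝ),
        IsJLEmbedding γ T {x | ∃ t : Fin m, x = freq p ((t : ℕ) + 1)} →
      ∀ (Ω : Type) [MeasurableSpace Ω] (μ : Measure Ω) [IsProbabilityMeasure μ]
        (Z : Fin k → Ω → ℝ),
        (∀ i, Measurable (Z i)) →
        iIndepFun Z μ →
        (∀ i, Measure.map (Z i) μ = radMeasure) →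
        (∫ ω, (⨆ t : Fin m, |∑ i, Z i ω * T.mulVec (freq p ((t : ℕ) + 1)) i|) ∂μ)
          ≤ C' * (1 + γ) * l2norm (freq p m) := by
  classical
  refine ⟨200, by norm_num, ?_⟩
  intro n m k hm p γ hγ0 hγ1 T hT Ω _inst μ _inst2 Z hZm hindep hmap
  haveI : Nonempty (Fin m) := ⟨⟨0, hm⟩⟩
  set L : ℝ := 1 + γ with hL
  have hLpos : 0 < L := by rw [hL]; linarith
  set B : ℝ := ∑ j, (freq p m j) ^ 2 with hB
  have hB0 : 0 ≤ B := Finset.sum_nonneg fun j _ => sq_nonneg _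
  have hfreq_nonneg : ∀ (a : ℕ) (j : Fin n), 0 ≤ freq p a j := fun a j => Nat.cast_nonneg _
  have hfreq_mono : ∀ (a c : ℕ), a ≤ c → ∀ j, freq p a j ≤ freq p c j := by
    intro a c hac j
    have hsub : (Finset.univ.filter fun t' : Fin m => (t' : ℕ) < a ∧ p t' = j)
        ⊆ (Finset.univ.filter fun t' : Fin m => (t' : ℕ) < c ∧ p t' = j) := by
      intro t' ht'
      rw [Finset.mem_filter] at ht' ⊢
      exact ⟨ht'.1, ⟨lt_of_lt_of_le ht'.2.1 hac, ht'.2.2⟩⟩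
    have hcard := Finset.card_le_card hsub
    unfold freq
    exact_mod_cast hcard
  set u : Fin m → Fin n → ℝ := fun t => freq p ((t : ℕ) + 1) with hu
  set bfun : Fin m → ℝ := fun t => ∑ j, (u t j) ^ 2 with hbfun
  have hbB : ∀ t, bfun t ≤ B := by
    intro t
    apply Finset.sum_le_sum
    intro j _
    have h1 : u t j ≤ freq p m j := hfreq_mono ((t : ℕ) + 1) m (Nat.succ_le_of_lt t.isLt) j
    have h2 : (0:ℝ) ≤ u t j := hfreq_nonneg _ j
    nlinarith
  have hb0 : ∀ t, 0 ≤ bfun t := fun t => Finset.sum_nonneg fun j _ => sq_nonneg _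
  rcases eq_or_lt_of_le hB0 with hB0' | hBpos
  · -- degenerate case `B = 0`
    have hfm : ∀ j, freq p m j = 0 := by
      intro j
      have h := (Finset.sum_eq_zero_iff_of_nonneg
        (fun j _ => sq_nonneg (freq p m j))).mp hB0'.symm j (Finset.mem_univ j)
      exact sq_eq_zero_iff.mp h
    have hu0 : ∀ (t : Fin m) (j : Fin n), freq p ((t : ℕ) + 1) j = 0 := by
      intro t j
      have h1 := hfreq_mono ((t : ℕ) + 1) m (Nat.succ_le_of_lt t.isLt) j
      have h2 := hfreq_nonneg ((t : ℕ) + 1) j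
      rw [hfm j] at h1
      linarith
    have hzero : ∀ ω, (⨆ t : Fin m, |∑ i, Z i ω * T.mulVec (freq p ((t : ℕ) + 1)) i|)
        = (0:ℝ) := by
      intro ω
      have hmv : ∀ (t : Fin m) (i : Fin k), T.mulVec (freq p ((t : ℕ) + 1)) i = 0 := by
        intro t i
        rw [show freq p ((t : ℕ) + 1) = (0 : Fin n → ℝ) from funext (hu0 t),
          Matrix.mulVec_zero]
        simp
      simp only [hmv, mul_zero, Finset.sum_const_zero, abs_zero]
      exact ciSup_const
    simp only [hzero, integral_zero]
    have hl2nn : 0 ≤ l2norm (freq p m) := Real.sqrt_nonneg _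
    nlinarith
  · -- main case `0 < B`
    set D : ℝ := Real.sqrt 2 * L * Real.sqrt B with hD
    have hs2 : (0:ℝ) < Real.sqrt 2 := Real.sqrt_pos.mpr two_pos
    have hsB : (0:ℝ) < Real.sqrt B := Real.sqrt_pos.mpr hBpos
    have hDpos : 0 < D := mul_pos (mul_pos hs2 hLpos) hsB
    have hD2 : D ^ 2 = 2 * L ^ 2 * B := by
      rw [hD, mul_pow, mul_pow, Real.sq_sqrt two_pos.le, Real.sq_sqrt hB0]
    set V : Set (Fin n → ℝ) := {x | ∃ t : Fin m, x = freq p ((t : ℕ) + 1)} with hVdef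
    have hTsq : ∀ x ∈ V ∪ {0}, ∀ y ∈ V ∪ {0},
        (∑ i, (T.mulVec x i - T.mulVec y i) ^ 2) ≤ L ^ 2 * ∑ j, (x j - y j) ^ 2 := by
      intro x hx y hy
      have h := (hT x hx y hy).2
      have e1 : l2norm (T.mulVec x - T.mulVec y) * l2norm (T.mulVec x - T.mulVec y)
          = ∑ i, (T.mulVec x i - T.mulVec y i) ^ 2 := by
        unfold l2norm
        rw [Real.mul_self_sqrt (Finset.sum_nonneg fun i _ => sq_nonneg _)]
        exact Finset.sum_congr rfl fun i _ => by rw [Pi.sub_apply]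
      have e2 : l2norm (x - y) * l2norm (x - y) = ∑ j, (x j - y j) ^ 2 := by
        unfold l2norm
        rw [Real.mul_self_sqrt (Finset.sum_nonneg fun j _ => sq_nonneg _)]
        exact Finset.sum_congr rfl fun j _ => by rw [Pi.sub_apply]
      have hnn : 0 ≤ l2norm (T.mulVec x - T.mulVec y) := Real.sqrt_nonneg _
      have key := mul_self_le_mul_self hnn h
      rw [e1] at key
      have e3 : (1 + γ) * l2norm (x - y) * ((1 + γ) * l2norm (x - y))
          = L ^ 2 * (l2norm (x - y) * l2norm (x - y)) := by rw [hL]; ring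
      rw [e3, e2] at key
      exact key
    have hV : ∀ t : Fin m, u t ∈ V ∪ {0} := fun t => Or.inl ⟨t, rfl⟩
    have h0V : (0 : Fin n → ℝ) ∈ V ∪ {0} := Or.inr rfl
    have hzero' : ∀ t : Fin m, (∑ i, (T.mulVec (u t) i) ^ 2) ≤ D ^ 2 / 2 := by
      intro t
      have h := hTsq (u t) (hV t) 0 h0V
      simp only [Matrix.mulVec_zero, Pi.zero_apply, sub_zero] at h
      refine h.trans ?_
      rw [hD2]
      have h1 : (∑ j, u t j ^ 2) ≤ B := hbB t
      have hL2 : (0:ℝ) ≤ L ^ 2 := sq_nonneg L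
      calc L ^ 2 * ∑ j, u t j ^ 2 ≤ L ^ 2 * B := mul_le_mul_of_nonneg_left h1 hL2
        _ = 2 * L ^ 2 * B / 2 := by ring
    have hlip : ∀ s t : Fin m, (∑ i, (T.mulVec (u t) i - T.mulVec (u s) i) ^ 2)
        ≤ D ^ 2 / (2 * B) * |bfun t - bfun s| := by
      intro s t
      have hDB : D ^ 2 / (2 * B) = L ^ 2 := by
        rw [hD2]
        field_simp
      rw [hDB]
      have main : ∀ s' t' : Fin m, s' ≤ t' →
          (∑ i, (T.mulVec (u t') i - T.mulVec (u s') i) ^ 2)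
            ≤ L ^ 2 * (bfun t' - bfun s') := by
        intro s' t' hle
        refine (hTsq (u t') (hV t') (u s') (hV s')).trans ?_
        apply mul_le_mul_of_nonneg_left ?_ (sq_nonneg L)
        have hmono : ∀ j, u s' j ≤ u t' j := fun j =>
          hfreq_mono _ _ (Nat.succ_le_succ (Fin.le_def.mp hle)) j
        calc ∑ j, (u t' j - u s' j) ^ 2 ≤ ∑ j, (u t' j ^ 2 - u s' j ^ 2) :=
              Finset.sum_le_sum fun j _ => by
                nlinarith [hfreq_nonneg ((s' : ℕ) + 1) j, hmono j]
          _ = bfun t' - bfun s' := by rw [Finset.sum_sub_distrib]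
      rcases le_total s t with hle | hle
      · refine (main s t hle).trans ?_
        have h1 : bfun t - bfun s ≤ |bfun t - bfun s| := le_abs_self _
        nlinarith [sq_nonneg L]
      · have h1 := main t s hle
        have e : (∑ i, (T.mulVec (u t) i - T.mulVec (u s) i) ^ 2)
            = ∑ i, (T.mulVec (u s) i - T.mulVec (u t) i) ^ 2 :=
          Finset.sum_congr rfl fun i _ => by ring
        rw [e]
        refine h1.trans ?_
        have h2 : bfun s - bfun t ≤ |bfun t - bfun s| := by
          rw [abs_sub_comm]
          exact le_abs_self _
        nlinarith [sq_nonneg L]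
    have main := chain_main hZm hindep hmap m hm (fun t => T.mulVec (u t)) bfun B D
      hBpos hDpos hb0 hbB hzero' hlip
    have hl2 : l2norm (freq p m) = Real.sqrt B := rfl
    calc ∫ ω, (⨆ t : Fin m, |∑ i, Z i ω * T.mulVec (freq p ((t : ℕ) + 1)) i|) ∂μ
        ≤ 54 * D := main
      _ ≤ 200 * (1 + γ) * l2norm (freq p m) := by
          rw [hl2, hD, hL]
          have h15 : Real.sqrt 2 ≤ 1.5 := by
            nlinarith [Real.sq_sqrt (two_pos.le), Real.sqrt_nonneg 2]
          nlinarith [mul_pos hLpos hsB, hLpos, hsB]
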